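/- Let Λ > 1, 0 < α < 1, ε ∈ (0, e^{-1}), and suppose |ln ε|^{(1−α)/4} > 2^{1/4} Λ^{1/2} (2(Δ+2)π)^{1/4} for some Δ ≥ 0. Set s = (2(Δ+2)π)^{-1/4} Λ^{1/2} |ln ε|^{(1−α)/4}. Then s > 2^{1/4} Λ and, for μ(s) = π^{-1}((s/Λ)⁴ − 1)^{-1/2}, 2μ(s)|ln ε| − 2(Δ+2)s² ≥ 2 (2(Δ+2)/π)^{1/2} Λ |ln ε|^{(1+α)/2} (1 − (1/2)|ln ε|^{-α}) > 0. -/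

import Mathlib

open Real

theorem stmt_18 (Λ α ε Δ : ℝ) (hΛ : 1 < Λ) (hα0 : 0 < α) (hα1 : α < 1)
    (hε0 : 0 < ε) (hε1 : ε < Real.exp (-1)) (hΔ : 0 ≤ Δ)
    (hcase : |Real.log ε| ^ ((1 - α)/4) >
      (2 : ℝ) ^ ((1:ℝ)/4) * Λ ^ ((1:ℝ)/2) * (2 * (Δ + 2) * Real.pi) ^ ((1:ℝ)/4)) :
    (2 * (Δ + 2) * Real.pi) ^ (-(1:ℝ)/4) * Λ ^ ((1:ℝ)/2) * |Real.log ε| ^ ((1 - α)/4)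
        > (2 : ℝ) ^ ((1:ℝ)/4) * Λ ∧
    (let s := (2 * (Δ + 2) * Real.pi) ^ (-(1:ℝ)/4) * Λ ^ ((1:ℝ)/2) *
        |Real.log ε| ^ ((1 - α)/4);
      let μ := Real.pi⁻¹ * ((s / Λ) ^ (4:ℕ) - 1) ^ (-(1:ℝ)/2);
      2 * μ * |Real.log ε| - 2 * (Δ + 2) * s ^ 2 ≥
        2 * (2 * (Δ + 2) / Real.pi) ^ ((1:ℝ)/2) * Λ * |Real.log ε| ^ ((1 + α)/2) *
          (1 - (1/2) * |Real.log ε| ^ (-α)) ∧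
      0 < 2 * (2 * (Δ + 2) / Real.pi) ^ ((1:ℝ)/2) * Λ * |Real.log ε| ^ ((1 + α)/2) *
          (1 - (1/2) * |Real.log ε| ^ (-α))) := by
  have hπ : 0 < Real.pi := Real.pi_pos
  have hΛ0 : (0:ℝ) < Λ := by linarith
  have hlog : Real.log ε < -1 := by
    have h := Real.log_lt_log hε0 hε1
    rwa [Real.log_exp] at h
  have hL : 1 < |Real.log ε| := by
    rw [abs_of_neg (by linarith)]; linarith
  have hL0 : (0:ℝ) < |Real.log ε| := by linarith
  have hP : (0:ℝ) < 2 * (Δ + 2) * Real.pi := by positivity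
  set L := |Real.log ε| with hLdef
  set P := 2 * (Δ + 2) * Real.pi with hPdef
  set s := P ^ (-(1:ℝ)/4) * Λ ^ ((1:ℝ)/2) * L ^ ((1 - α)/4) with hsdef
  have hs0 : 0 < s := by positivity
  have hΛΛ : Λ ^ ((1:ℝ)/2) * Λ ^ ((1:ℝ)/2) = Λ := by
    rw [← Real.rpow_add hΛ0]; norm_num
  have hPP : P ^ (-(1:ℝ)/4) * P ^ ((1:ℝ)/4) = 1 := by
    rw [← Real.rpow_add hP]; norm_num
  have hA : s > 2 ^ ((1:ℝ)/4) * Λ := by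
    have h1 : P ^ (-(1:ℝ)/4) * Λ ^ ((1:ℝ)/2) *
        (2 ^ ((1:ℝ)/4) * Λ ^ ((1:ℝ)/2) * P ^ ((1:ℝ)/4)) = 2 ^ ((1:ℝ)/4) * Λ := by
      rw [show P ^ (-(1:ℝ)/4) * Λ ^ ((1:ℝ)/2) *
        (2 ^ ((1:ℝ)/4) * Λ ^ ((1:ℝ)/2) * P ^ ((1:ℝ)/4)) =
        2 ^ ((1:ℝ)/4) * (Λ ^ ((1:ℝ)/2) * Λ ^ ((1:ℝ)/2)) *
          (P ^ (-(1:ℝ)/4) * P ^ ((1:ℝ)/4)) from by ring, hΛΛ, hPP]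
      ring
    have h2 : P ^ (-(1:ℝ)/4) * Λ ^ ((1:ℝ)/2) *
        (2 ^ ((1:ℝ)/4) * Λ ^ ((1:ℝ)/2) * P ^ ((1:ℝ)/4)) <
        P ^ (-(1:ℝ)/4) * Λ ^ ((1:ℝ)/2) * L ^ ((1 - α)/4) := by
      apply mul_lt_mul_of_pos_left hcase
      positivity
    rw [h1] at h2
    exact h2
  refine ⟨hA, ?_⟩
  dsimp only
  have hpow4 : ∀ (x r : ℝ), 0 < x → (x ^ r) ^ (4:ℕ) = x ^ (r * 4) := by
    intro x r hx
    rw [← Real.rpow_natCast (x ^ r) 4, ← Real.rpow_mul hx.le]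
    norm_num
  have hpow2 : ∀ (x r : ℝ), 0 < x → (x ^ r) ^ (2:ℕ) = x ^ (r * 2) := by
    intro x r hx
    rw [← Real.rpow_natCast (x ^ r) 2, ← Real.rpow_mul hx.le]
    norm_num
  have hX : (s / Λ) ^ (4:ℕ) = P ^ (-(1:ℝ)) * Λ ^ (-(2:ℝ)) * L ^ (1 - α) := by
    rw [hsdef, div_pow, mul_pow, mul_pow, hpow4 P _ hP, hpow4 Λ _ hΛ0, hpow4 L _ hL0,
      ← Real.rpow_natCast Λ 4, div_eq_mul_inv, ← Real.rpow_neg hΛ0.le]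
    rw [show P ^ (-(1:ℝ)/4*4) * Λ ^ ((1:ℝ)/2*4) * L ^ ((1-α)/4*4) * Λ ^ (-((4:ℕ):ℝ)) =
      P ^ (-(1:ℝ)/4*4) * (Λ ^ ((1:ℝ)/2*4) * Λ ^ (-((4:ℕ):ℝ))) * L ^ ((1-α)/4*4) from by ring,
      ← Real.rpow_add hΛ0]
    norm_num
  have hq : 2 ^ ((1:ℝ)/4) < s / Λ := (lt_div_iff₀ hΛ0).mpr (by linarith [hA])
  have hX2 : (2:ℝ) < (s / Λ) ^ (4:ℕ) := by
    have h := pow_lt_pow_left₀ hq (by positivity : (0:ℝ) ≤ 2 ^ ((1:ℝ)/4)) (by norm_num : (4:ℕ) ≠ 0)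
    rwa [hpow4 2 _ (by norm_num), show (1:ℝ)/4*4 = 1 by norm_num, Real.rpow_one] at h
  set X := (s / Λ) ^ (4:ℕ) with hXdef
  have hX1 : (0:ℝ) < X - 1 := by linarith
  have hXle : X - 1 ≤ X := by linarith
  have hmono : X ^ (-(1:ℝ)/2) ≤ (X - 1) ^ (-(1:ℝ)/2) := by
    rw [show (-(1:ℝ)/2) = -(1/2) by norm_num, Real.rpow_neg (by linarith),
      Real.rpow_neg hX1.le]
    apply inv_anti₀
    · exact Real.rpow_pos_of_pos hX1 _
    · exact Real.rpow_le_rpow hX1.le hXle (by norm_num)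
  have hXval : X ^ (-(1:ℝ)/2) = P ^ ((1:ℝ)/2) * Λ * L ^ ((α-1)/2) := by
    rw [hX, Real.mul_rpow (by positivity) (by positivity),
      Real.mul_rpow (by positivity) (by positivity),
      ← Real.rpow_mul hP.le, ← Real.rpow_mul hΛ0.le, ← Real.rpow_mul hL0.le]
    rw [show (-(1:ℝ)) * (-(1:ℝ)/2) = 1/2 by norm_num,
      show (-(2:ℝ)) * (-(1:ℝ)/2) = 1 by norm_num,
      show (1 - α) * (-(1:ℝ)/2) = (α-1)/2 by ring, Real.rpow_one]
  have hs2 : s ^ (2:ℕ) = P ^ (-(1:ℝ)/2) * Λ * L ^ ((1-α)/2) := by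
    rw [hsdef, mul_pow, mul_pow, hpow2 P _ hP, hpow2 Λ _ hΛ0, hpow2 L _ hL0]
    rw [show (-(1:ℝ)/4*2) = -(1:ℝ)/2 by norm_num,
      show ((1:ℝ)/2*2) = 1 by norm_num,
      show ((1-α)/4*2) = (1-α)/2 by ring, Real.rpow_one]
  have hD : (2*(Δ+2)/Real.pi) ^ ((1:ℝ)/2) = P ^ ((1:ℝ)/2) * Real.pi⁻¹ := by
    rw [show 2*(Δ+2)/Real.pi = P * (Real.pi⁻¹ * Real.pi⁻¹) from by
        rw [hPdef]; field_simp,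
      Real.mul_rpow hP.le (by positivity),
      show Real.pi⁻¹ * Real.pi⁻¹ = (Real.pi⁻¹) ^ (2:ℕ) from by ring,
      ← Real.rpow_natCast (Real.pi⁻¹) 2, ← Real.rpow_mul (by positivity)]
    norm_num
  have hD2 : 2*(Δ+2) * P ^ (-(1:ℝ)/2) = P ^ ((1:ℝ)/2) * Real.pi⁻¹ := by
    have h1 : 2*(Δ+2) = P * Real.pi⁻¹ := by rw [hPdef]; field_simp
    rw [h1, show P * Real.pi⁻¹ * P ^ (-(1:ℝ)/2) =
      (P ^ (1:ℝ) * P ^ (-(1:ℝ)/2)) * Real.pi⁻¹ from by rw [Real.rpow_one]; ring,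
      ← Real.rpow_add hP]
    norm_num
  have hLsplit : L ^ ((α-1)/2) * L = L ^ ((1+α)/2) := by
    rw [show L ^ ((α-1)/2) * L = L ^ ((α-1)/2) * L ^ (1:ℝ) from by rw [Real.rpow_one],
      ← Real.rpow_add hL0]
    ring_nf
  have hLsplit2 : L ^ ((1+α)/2) * L ^ (-α) = L ^ ((1-α)/2) := by
    rw [← Real.rpow_add hL0]; ring_nf
  have hLneg : L ^ (-α) < 1 :=
    Real.rpow_lt_one_of_one_lt_of_neg hL (by linarith)
  have hLnegpos : (0:ℝ) < L ^ (-α) := Real.rpow_pos_of_pos hL0 _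
  have hfac : (0:ℝ) < 1 - 1/2 * L ^ (-α) := by linarith
  constructor
  · -- main inequality
    have hRHS : 2 * (2*(Δ+2)/Real.pi) ^ ((1:ℝ)/2) * Λ * L ^ ((1+α)/2) *
        (1 - 1/2 * L ^ (-α)) =
        2 * (Real.pi⁻¹ * (P ^ ((1:ℝ)/2) * Λ * L ^ ((α-1)/2))) * L -
          P ^ ((1:ℝ)/2) * Real.pi⁻¹ * Λ * L ^ ((1-α)/2) := by
      rw [hD]
      have e1 : 2 * (P ^ ((1:ℝ)/2) * Real.pi⁻¹) * Λ * L ^ ((1+α)/2) *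
          (1 - 1/2 * L ^ (-α)) =
          2 * (P ^ ((1:ℝ)/2) * Real.pi⁻¹) * Λ * L ^ ((1+α)/2) -
          P ^ ((1:ℝ)/2) * Real.pi⁻¹ * Λ * (L ^ ((1+α)/2) * L ^ (-α)) := by ring
      rw [e1, hLsplit2, ← hLsplit]
      ring
    rw [hs2, hRHS]
    have hmul : 2 * (Real.pi⁻¹ * (P ^ ((1:ℝ)/2) * Λ * L ^ ((α-1)/2))) * L ≤
        2 * (Real.pi⁻¹ * (X-1) ^ (-(1:ℝ)/2)) * L := by
      rw [← hXval]
      gcongr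
    have heq2 : 2*(Δ+2) * (P ^ (-(1:ℝ)/2) * Λ * L ^ ((1-α)/2)) =
        P ^ ((1:ℝ)/2) * Real.pi⁻¹ * Λ * L ^ ((1-α)/2) := by
      rw [show 2*(Δ+2) * (P ^ (-(1:ℝ)/2) * Λ * L ^ ((1-α)/2)) =
        (2*(Δ+2) * P ^ (-(1:ℝ)/2)) * Λ * L ^ ((1-α)/2) from by ring, hD2]
    linarith [hmul, heq2.le, heq2.ge]
  · -- positivity
    have : (0:ℝ) < 2 * (2*(Δ+2)/Real.pi) ^ ((1:ℝ)/2) * Λ * L ^ ((1+α)/2) := by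
      positivity
    exact mul_pos this hfac
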